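/- Over the ordered alphabet {a<b<c<d}, the words w = bcbabcbcdcbcbbabcbccdccbb and v = cbbabbcbcdccbcbabcbcdcbcb are M-equivalent, neither contains a length-2 factor of non-consecutive letters, yet |w|_{ac} ≠ |v|_{ac} (so they are P-distinct via the projection onto {a,c}). -/
import Mathlib


open List

/-- Number of occurrences of `v` as a scattered subsequence of `w`. -/
def scount {α : Type*} [DecidableEq α] (w v : List α) : ℕ := w.sublists.count v

/-- The quaternary ordered alphabet {a < b < c < d}. -/
inductive ABCD | a | b | c | d
deriving DecidableEq

open ABCD

/-- Position of a letter in the ordering a < b < c < d. -/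
def ord : ABCD → ℕ
  | a => 0
  | b => 1
  | c => 2
  | d => 3

/-- M-equivalence over {a < b < c < d}: agreement on subsequence counts of all
factors of the alphabet word abcd. -/
def MEq4 (w w' : List ABCD) : Prop :=
  scount w [a] = scount w' [a] ∧ scount w [b] = scount w' [b] ∧
  scount w [c] = scount w' [c] ∧ scount w [d] = scount w' [d] ∧
  scount w [a, b] = scount w' [a, b] ∧ scount w [b, c] = scount w' [b, c] ∧
  scount w [c, d] = scount w' [c, d] ∧
  scount w [a, b, c] = scount w' [a, b, c] ∧
  scount w [b, c, d] = scount w' [b, c, d] ∧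
  scount w [a, b, c, d] = scount w' [a, b, c, d]

/-- `w` has no length-2 factor consisting of letters non-consecutive in the ordering. -/
def NoNonconsecFactor (w : List ABCD) : Prop :=
  ¬ ∃ x y : ABCD, [x, y] <:+: w ∧ (ord x + 2 ≤ ord y ∨ ord y + 2 ≤ ord x)

def wEx : List ABCD :=
  [b, c, b, a, b, c, b, c, d, c, b, c, b, b, a, b, c, b, c, c, d, c, c, b, b]

def vEx : List ABCD :=
  [c, b, b, a, b, b, c, b, c, d, c, c, b, c, b, a, b, c, b, c, d, c, b, c, b]


def dp {α : Type*} [DecidableEq α] : List α → List α → ℕ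
  | _, [] => 1
  | [], _ :: _ => 0
  | x :: w, y :: v => dp w (y :: v) + if x = y then dp w v else 0

lemma aux_sum {α : Type*} [DecidableEq α] (x : α) (v : List α) (L : List (List α)) :
    (map (count v ∘ fun s => [s, x :: s]) L).sum
      = count v L + count v (map (x :: ·) L) := by
  induction L with
  | nil => simp
  | cons s L ih =>
    simp only [map_cons, sum_cons, count_cons, ih, Function.comp_apply]
    simp only [count_nil]
    ring

lemma count_map_cons_nil {α : Type*} [DecidableEq α] (x : α) (L : List (List α)) :
    count ([] : List α) (map (x :: ·) L) = 0 := by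
  rw [count_eq_zero]
  simp

lemma count_map_cons {α : Type*} [DecidableEq α] (x y : α) (v : List α) (L : List (List α)) :
    count (y :: v) (map (x :: ·) L) = if x = y then count v L else 0 := by
  induction L with
  | nil => simp
  | cons s L ih =>
    simp only [map_cons, count_cons, ih]
    by_cases h : x = y <;> by_cases h2 : s = v <;>
      simp [h, h2, List.cons_eq_cons]

lemma scount_eq_dp {α : Type*} [DecidableEq α] (w v : List α) : scount w v = dp w v := by
  induction w generalizing v with
  | nil => cases v <;> simp [scount, dp, sublists]
  | cons x w ih =>
    have key : scount (x :: w) v = scount w v + count v (map (x :: ·) w.sublists) := by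
      simp only [scount, sublists_cons, bind_eq_flatMap, count_flatMap]
      exact aux_sum x v w.sublists
    cases v with
    | nil => rw [key, count_map_cons_nil, ih]; simp [dp]
    | cons y v =>
      rw [key, count_map_cons, ih]
      simp only [dp]
      have hv : count v w.sublists = dp w v := ih v
      rw [hv]

instance : Fintype ABCD :=
  ⟨⟨[ABCD.a, ABCD.b, ABCD.c, ABCD.d], by decide⟩, fun x => by cases x <;> decide⟩

theorem stmt_19 :
    MEq4 wEx vEx ∧ NoNonconsecFactor wEx ∧ NoNonconsecFactor vEx ∧
      scount wEx [a, c] ≠ scount vEx [a, c] := by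
  refine ⟨?_, ?_, ?_, ?_⟩
  · unfold MEq4
    simp only [scount_eq_dp]
    decide
  · unfold NoNonconsecFactor
    decide
  · unfold NoNonconsecFactor
    decide
  · simp only [scount_eq_dp]
    decide
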